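/- arXiv:2303.14601 — 7 statements merged into one kernel-verified Lean document; each statement's English description precedes it below -/
import Mathlib

section
/- Generalized Neyman–Pearson lower-bound direction: Let X, Y be random variables on a finite space Φ with probability mass functions p_X, p_Y, and g: Φ → [0,1] a function with g(Z) = 0 for all Z in a subset Φ'. Suppose O ⊆ Φ \ Φ' satisfies p_Y(Z) ≤ ρ·p_X(Z) for all Z ∈ O and p_Y(Z) ≥ ρ·p_X(Z) for all Z ∈ (Φ \ Φ') \ O, for some ρ > 0. If E[g(X)] ≥ Pr(X ∈ O), then E[g(Y)] ≥ Pr(Y ∈ O). -/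
open Finset

/-- Generalized Neyman–Pearson lemma, lower-bound direction. `Φ` is a finite space, `pX, pY`
are pmfs on it, `g : Φ → [0,1]` vanishes on `Φ'`, and `O ⊆ Φ \ Φ'` satisfies
`pY ≤ ρ·pX` on `O` and `pY ≥ ρ·pX` on `(Φ \ Φ') \ O` for some `ρ > 0`.
If `E[g(X)] ≥ Pr(X ∈ O)` then `E[g(Y)] ≥ Pr(Y ∈ O)`. -/
theorem neyman_pearson_lower {Φ : Type*} [Fintype Φ] [DecidableEq Φ]
    (pX pY : Φ → ℝ)
    (hpX0 : ∀ z, 0 ≤ pX z) (hpY0 : ∀ z, 0 ≤ pY z)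
    (hpX1 : ∑ z, pX z = 1) (hpY1 : ∑ z, pY z = 1)
    (g : Φ → ℝ) (hg0 : ∀ z, 0 ≤ g z) (hg1 : ∀ z, g z ≤ 1)
    (Φ' : Finset Φ) (hgΦ' : ∀ z ∈ Φ', g z = 0)
    (O : Finset Φ) (hO : O ⊆ Finset.univ \ Φ')
    (ρ : ℝ) (hρ : 0 < ρ)
    (hle : ∀ z ∈ O, pY z ≤ ρ * pX z)
    (hge : ∀ z ∈ (Finset.univ \ Φ') \ O, ρ * pX z ≤ pY z)
    (hX : ∑ z ∈ O, pX z ≤ ∑ z, g z * pX z) :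
    ∑ z ∈ O, pY z ≤ ∑ z, g z * pY z := by
  have key : ∀ z, ρ * (g z * pX z - (if z ∈ O then pX z else 0))
      ≤ g z * pY z - (if z ∈ O then pY z else 0) := by
    intro z
    by_cases hzO : z ∈ O
    · simp only [hzO, if_pos]
      have h1 : g z ≤ 1 := hg1 z
      have h2 : pY z ≤ ρ * pX z := hle z hzO
      nlinarith
    · simp only [hzO, if_neg, not_false_iff, sub_zero]
      by_cases hzΦ' : z ∈ Φ'
      · simp [hgΦ' z hzΦ']
      · have h2 : ρ * pX z ≤ pY z := hge z (by simp [hzΦ', hzO])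
        nlinarith [hg0 z]
  have hsum := Finset.sum_le_sum (fun z (_ : z ∈ Finset.univ) => key z)
  have e1 : ∑ z, (if z ∈ O then pX z else 0) = ∑ z ∈ O, pX z := by
    rw [Finset.sum_ite_mem, Finset.univ_inter]
  have e2 : ∑ z, (if z ∈ O then pY z else 0) = ∑ z ∈ O, pY z := by
    rw [Finset.sum_ite_mem, Finset.univ_inter]
  rw [← Finset.mul_sum, Finset.sum_sub_distrib, Finset.sum_sub_distrib, e1, e2] at hsum
  nlinarith
end

section
/- Generalized Neyman–Pearson upper-bound direction for multiple functions: Let X, Y be random variables on a finite space Φ with pmfs p_X, p_Y, and let g_1,...,g_γ: Φ → [0,1] satisfy Σ_{l=1}^{γ} g_l(Z) ≤ η for all Z ∈ Φ, and g_l(Z) = 0 for all Z ∈ Φ' and all l. Suppose O ⊆ Φ satisfies p_Y(Z) ≥ ρ·p_X(Z) for all Z ∈ O and p_Y(Z) ≤ ρ·p_X(Z) for all Z ∈ (Φ \ O) \ Φ', for some ρ > 0. If (1/η)·Σ_l E[g_l(X)] ≤ Pr(X ∈ O), then (1/η)·Σ_l E[g_l(Y)] ≤ Pr(Y ∈ O).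 -/
open Finset

/-- Generalized Neyman–Pearson lemma, upper-bound direction for multiple functions.
`g₁,…,g_γ : Φ → [0,1]` satisfy `Σ_l g_l(Z) ≤ η` pointwise and vanish on `Φ'`.
`O ⊆ Φ` satisfies `pY ≥ ρ·pX` on `O` and `pY ≤ ρ·pX` on `(Φ \ O) \ Φ'` for some `ρ > 0`.
If `(1/η)·Σ_l E[g_l(X)] ≤ Pr(X ∈ O)` then `(1/η)·Σ_l E[g_l(Y)] ≤ Pr(Y ∈ O)`. -/
theorem neyman_pearson_upper_multi {Φ : Type*} [Fintype Φ] [DecidableEq Φ]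
    (pX pY : Φ → ℝ)
    (hpX0 : ∀ z, 0 ≤ pX z) (hpY0 : ∀ z, 0 ≤ pY z)
    (hpX1 : ∑ z, pX z = 1) (hpY1 : ∑ z, pY z = 1)
    (γ : ℕ) (g : Fin γ → Φ → ℝ)
    (hg0 : ∀ l z, 0 ≤ g l z) (hg1 : ∀ l z, g l z ≤ 1)
    (η : ℝ) (hη : 0 < η) (hsum : ∀ z, ∑ l, g l z ≤ η)
    (Φ' : Finset Φ) (hgΦ' : ∀ l, ∀ z ∈ Φ', g l z = 0)
    (O : Finset Φ) (ρ : ℝ) (hρ : 0 < ρ)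
    (hge : ∀ z ∈ O, ρ * pX z ≤ pY z)
    (hle : ∀ z ∈ (Finset.univ \ O) \ Φ', pY z ≤ ρ * pX z)
    (hX : (1 / η) * ∑ l, ∑ z, g l z * pX z ≤ ∑ z ∈ O, pX z) :
    (1 / η) * ∑ l, ∑ z, g l z * pY z ≤ ∑ z ∈ O, pY z := by
  set G : Φ → ℝ := fun z => (1 / η) * ∑ l, g l z with hGdef
  have hG0 : ∀ z, 0 ≤ G z := fun z =>
    mul_nonneg (by positivity) (Finset.sum_nonneg fun l _ => hg0 l z)
  have hG1 : ∀ z, G z ≤ 1 := fun z => by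
    have h := hsum z
    rw [hGdef]
    simp only
    rw [one_div, inv_mul_le_iff₀ hη]
    simpa using h
  have hGΦ' : ∀ z ∈ Φ', G z = 0 := fun z hz => by
    simp only [hGdef]
    rw [Finset.sum_congr rfl fun l _ => hgΦ' l z hz]
    simp
  have key : ∀ p : Φ → ℝ, (1 / η) * ∑ l, ∑ z, g l z * p z = ∑ z, G z * p z := by
    intro p
    rw [Finset.sum_comm, Finset.mul_sum]
    exact Finset.sum_congr rfl fun z _ => by
      rw [hGdef]; rw [← Finset.sum_mul]; ring
  rw [key] at hX ⊢
  have hsplit : ∀ p : Φ → ℝ, ∑ z, G z * p z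
      = ∑ z ∈ O, G z * p z + ∑ z ∈ Finset.univ \ O, G z * p z := by
    intro p
    rw [← Finset.sum_sdiff (Finset.subset_univ O)]; ring
  -- bound on complement
  have hcomp : ∑ z ∈ Finset.univ \ O, G z * pY z
      ≤ ρ * ∑ z ∈ Finset.univ \ O, G z * pX z := by
    rw [Finset.mul_sum]
    apply Finset.sum_le_sum
    intro z hz
    by_cases hz' : z ∈ Φ'
    · rw [hGΦ' z hz']; simp
    · have := hle z (by simp [Finset.mem_sdiff] at hz ⊢; tauto)
      have := hG0 z
      nlinarith
  -- bound on O
  have hO : ∑ z ∈ O, G z * pY z ≤ ∑ z ∈ O, pY z - ρ * (∑ z ∈ O, pX z - ∑ z ∈ O, G z * pX z) := by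
    have : ∀ z ∈ O, G z * pY z ≤ pY z - ρ * (pX z - G z * pX z) := by
      intro z hz
      have h1 := hge z hz
      have h2 := hG1 z
      have h3 := hG0 z
      nlinarith [hpX0 z]
    calc ∑ z ∈ O, G z * pY z ≤ ∑ z ∈ O, (pY z - ρ * (pX z - G z * pX z)) :=
          Finset.sum_le_sum this
      _ = ∑ z ∈ O, pY z - ρ * (∑ z ∈ O, pX z - ∑ z ∈ O, G z * pX z) := by
          rw [Finset.sum_sub_distrib, ← Finset.mul_sum, Finset.sum_sub_distrib]
  have hXsplit := hsplit pX
  have hYsplit := hsplit pY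
  rw [hXsplit] at hX
  rw [hYsplit]
  nlinarith
end

section
/- Lower bound on poisoned item probability: Let X be uniform over size-s subsets of U (|U|=n), Y uniform over size-s subsets of U' ⊇ U (|U'|=n'), u ∈ U fixed, and g: Φ → [0,1] with g(Z)=0 whenever u ∉ Z. Let p* be an integer multiple of 1/C(n,s) with p* ≤ E[g(X)] and p* ≤ s/n. Then E[g(Y)] ≥ p*·C(n,s)/C(n',s). -/
open Finset

/-- Lower bound on the poisoned item probability. `X` is uniform over size-`s` subsets of `U`
(`|U| = n`), `Y` uniform over size-`s` subsets of `U' ⊇ U` (`|U'| = n'`), `u ∈ U` is fixed,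
and `g : Φ → [0,1]` vanishes on subsets not containing `u`. If `p*` is an integer multiple of
`1/C(n,s)` with `p* ≤ E[g(X)]` and `p* ≤ s/n`, then `E[g(Y)] ≥ p*·C(n,s)/C(n',s)`. -/
theorem poisoned_prob_lower_bound {α : Type*} [DecidableEq α]
    (U U' : Finset α) (hUU' : U ⊆ U') (n n' s : ℕ) (hn : U.card = n)
    (hn' : U'.card = n') (hs : 1 ≤ s) (hsn : s ≤ n) (hnn' : n ≤ n')
    (u : α) (hu : u ∈ U)
    (g : Finset α → ℝ) (hg0 : ∀ Z, 0 ≤ g Z) (hg1 : ∀ Z, g Z ≤ 1)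
    (hgu : ∀ Z, u ∉ Z → g Z = 0)
    (pstar : ℝ) (hmult : ∃ k : ℕ, pstar = (k : ℝ) / (n.choose s : ℝ))
    (hle : pstar ≤ (∑ Z ∈ U.powersetCard s, g Z) / (n.choose s : ℝ))
    (hsn' : pstar ≤ (s : ℝ) / (n : ℝ)) :
    pstar * ((n.choose s : ℝ) / (n'.choose s : ℝ))
      ≤ (∑ Z ∈ U'.powersetCard s, g Z) / (n'.choose s : ℝ) := by
  have hcn : (0:ℝ) < (n.choose s : ℝ) := by
    exact_mod_cast Nat.choose_pos hsn
  have hcn' : (0:ℝ) < (n'.choose s : ℝ) := by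
    exact_mod_cast Nat.choose_pos (hsn.trans hnn')
  have h1 : pstar * (n.choose s : ℝ) ≤ ∑ Z ∈ U.powersetCard s, g Z :=
    (le_div_iff₀ hcn).mp hle
  have h2 : ∑ Z ∈ U.powersetCard s, g Z ≤ ∑ Z ∈ U'.powersetCard s, g Z :=
    Finset.sum_le_sum_of_subset_of_nonneg (powersetCard_mono hUU')
      (fun Z _ _ => hg0 Z)
  rw [mul_div_assoc']
  exact div_le_div_of_nonneg_right (h1.trans h2) hcn'.le
end

section
/- Upper bound on poisoned item probability: With X, Y, u as above, let g: Φ → [0,1] satisfy g(Z)=0 whenever u ∉ Z. Let p̄* be an integer multiple of 1/C(n,s) with E[g(X)] ≤ p̄* ≤ s/n. Then E[g(Y)] ≤ p̄*·C(n,s)/C(n',s) + s/n' − (s/n)·C(n,s)/C(n',s). -/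
open Finset

lemma card_psc_filter_mem {α : Type*} [DecidableEq α] (V : Finset α) (u : α) (hu : u ∈ V)
    (s : ℕ) (hs : 1 ≤ s) :
    ((V.powersetCard s).filter (fun Z => u ∈ Z)).card = (V.card - 1).choose (s - 1) := by
  rw [← card_erase_of_mem hu, ← card_powersetCard]
  apply Finset.card_bij' (fun Z _ => Z.erase u) (fun W _ => insert u W)
  · intro Z hZ
    exact insert_erase (mem_filter.1 hZ).2
  · intro W hW
    have huW : u ∉ W := fun h => (mem_erase.1 ((mem_powersetCard.1 hW).1 h)).1 rfl
    exact erase_insert huW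
  · intro Z hZ
    simp only [mem_filter, mem_powersetCard] at hZ
    simp only [mem_powersetCard]
    exact ⟨erase_subset_erase u hZ.1.1, by rw [card_erase_of_mem hZ.2, hZ.1.2]⟩
  · intro W hW
    simp only [mem_powersetCard] at hW
    have huW : u ∉ W := fun h => (mem_erase.1 (hW.1 h)).1 rfl
    simp only [mem_filter, mem_powersetCard]
    refine ⟨⟨?_, ?_⟩, mem_insert_self u W⟩
    · intro x hx
      rcases mem_insert.1 hx with rfl | hx
      · exact hu
      · exact (erase_subset u V) (hW.1 hx)
    · rw [card_insert_of_notMem huW, hW.2, Nat.sub_add_cancel hs]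

lemma mul_choose_aux (m s : ℕ) (hs : 1 ≤ s) (hm : 1 ≤ m) :
    m * (m - 1).choose (s - 1) = m.choose s * s := by
  obtain ⟨m', rfl⟩ := Nat.exists_eq_add_of_le hm
  obtain ⟨s', rfl⟩ := Nat.exists_eq_add_of_le hs
  simp only [Nat.add_sub_cancel_left, Nat.add_comm 1]
  exact Nat.add_one_mul_choose_eq m' s'

/-- Upper bound on the poisoned item probability. `X` is uniform over size-`s` subsets of `U`
(`|U| = n`), `Y` uniform over size-`s` subsets of `U' ⊇ U` (`|U'| = n'`), `u ∈ U` fixed,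
and `g : Φ → [0,1]` vanishes on subsets not containing `u`. If `p̄*` is an integer multiple of
`1/C(n,s)` with `E[g(X)] ≤ p̄* ≤ s/n`, then
`E[g(Y)] ≤ p̄*·C(n,s)/C(n',s) + s/n' − (s/n)·C(n,s)/C(n',s)`. -/
theorem poisoned_prob_upper_bound {α : Type*} [DecidableEq α]
    (U U' : Finset α) (hUU' : U ⊆ U') (n n' s : ℕ) (hn : U.card = n)
    (hn' : U'.card = n') (hs : 1 ≤ s) (hsn : s ≤ n) (hnn' : n ≤ n')
    (u : α) (hu : u ∈ U)
    (g : Finset α → ℝ) (hg0 : ∀ Z, 0 ≤ g Z) (hg1 : ∀ Z, g Z ≤ 1)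
    (hgu : ∀ Z, u ∉ Z → g Z = 0)
    (pbar : ℝ) (hmult : ∃ k : ℕ, pbar = (k : ℝ) / (n.choose s : ℝ))
    (hge : (∑ Z ∈ U.powersetCard s, g Z) / (n.choose s : ℝ) ≤ pbar)
    (hsn' : pbar ≤ (s : ℝ) / (n : ℝ)) :
    (∑ Z ∈ U'.powersetCard s, g Z) / (n'.choose s : ℝ)
      ≤ pbar * ((n.choose s : ℝ) / (n'.choose s : ℝ))
        + (s : ℝ) / (n' : ℝ) - ((s : ℝ) / (n : ℝ)) * ((n.choose s : ℝ) / (n'.choose s : ℝ)) := by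
  have hnpos : 0 < n := le_trans hs hsn
  have hn'pos : 0 < n' := le_trans hnpos hnn'
  have hNpos : 0 < n.choose s := Nat.choose_pos hsn
  have hN'pos : 0 < n'.choose s := Nat.choose_pos (le_trans hsn hnn')
  have hNr : (0:ℝ) < (n.choose s : ℝ) := by exact_mod_cast hNpos
  have hN'r : (0:ℝ) < (n'.choose s : ℝ) := by exact_mod_cast hN'pos
  set a : ℕ := (n - 1).choose (s - 1) with ha_def
  set a' : ℕ := (n' - 1).choose (s - 1) with ha'_def
  have haa' : a ≤ a' := Nat.choose_le_choose (s - 1) (by omega)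
  -- counting
  have hsub : U.powersetCard s ⊆ U'.powersetCard s := powersetCard_mono hUU'
  have hcardU : ((U.powersetCard s).filter (fun Z => u ∈ Z)).card = a := by
    rw [card_psc_filter_mem U u hu s hs, hn]
  have hcardU' : ((U'.powersetCard s).filter (fun Z => u ∈ Z)).card = a' := by
    rw [card_psc_filter_mem U' u (hUU' hu) s hs, hn']
  -- sum over subsets of U
  have h1 : (∑ Z ∈ U.powersetCard s, g Z) ≤ pbar * (n.choose s : ℝ) :=
    (div_le_iff₀ hNr).1 hge
  -- sum over the rest
  have hfilt_sub : (U.powersetCard s).filter (fun Z => u ∈ Z)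
      ⊆ (U'.powersetCard s).filter (fun Z => u ∈ Z) := filter_subset_filter _ hsub
  have hDset : (U'.powersetCard s \ U.powersetCard s).filter (fun Z => u ∈ Z)
      = (U'.powersetCard s).filter (fun Z => u ∈ Z)
        \ (U.powersetCard s).filter (fun Z => u ∈ Z) := by
    ext Z; simp only [mem_filter, mem_sdiff]; tauto
  have hDcard : ((U'.powersetCard s \ U.powersetCard s).filter (fun Z => u ∈ Z)).card
      = a' - a := by
    rw [hDset, card_sdiff_of_subset hfilt_sub, hcardU, hcardU']
  have h2 : (∑ Z ∈ U'.powersetCard s \ U.powersetCard s, g Z) ≤ ((a' : ℝ) - a) := by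
    have heq : ∑ Z ∈ (U'.powersetCard s \ U.powersetCard s).filter (fun Z => u ∈ Z), g Z
        = ∑ Z ∈ U'.powersetCard s \ U.powersetCard s, g Z := by
      apply Finset.sum_filter_of_ne
      intro Z _ hZ
      by_contra hc
      exact hZ (hgu Z hc)
    calc (∑ Z ∈ U'.powersetCard s \ U.powersetCard s, g Z)
        = ∑ Z ∈ (U'.powersetCard s \ U.powersetCard s).filter (fun Z => u ∈ Z), g Z := heq.symm
      _ ≤ ((U'.powersetCard s \ U.powersetCard s).filter (fun Z => u ∈ Z)).card • (1:ℝ) := by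
          apply Finset.sum_le_card_nsmul
          intro Z _; exact hg1 Z
      _ = (((a' - a : ℕ)) : ℝ) := by rw [hDcard]; simp
      _ = ((a':ℝ) - a) := by
          rw [Nat.cast_sub haa']
  have hkey : (∑ Z ∈ U'.powersetCard s, g Z)
      ≤ pbar * (n.choose s : ℝ) + ((a':ℝ) - a) := by
    rw [← Finset.sum_sdiff hsub]
    linarith
  -- choose identities
  have hid1 : (n:ℝ) * a = (n.choose s : ℝ) * s := by
    exact_mod_cast mul_choose_aux n s hs hnpos
  have hid2 : (n':ℝ) * a' = (n'.choose s : ℝ) * s := by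
    exact_mod_cast mul_choose_aux n' s hs hn'pos
  have hnr : (0:ℝ) < (n:ℝ) := by exact_mod_cast hnpos
  have hn'r : (0:ℝ) < (n':ℝ) := by exact_mod_cast hn'pos
  have ha : (a:ℝ) = (s:ℝ) / n * (n.choose s : ℝ) := by
    field_simp
    linarith [hid1]
  have ha' : (a':ℝ) = (s:ℝ) / n' * (n'.choose s : ℝ) := by
    field_simp
    linarith [hid2]
  calc (∑ Z ∈ U'.powersetCard s, g Z) / (n'.choose s : ℝ)
      ≤ (pbar * (n.choose s : ℝ) + ((a':ℝ) - a)) / (n'.choose s : ℝ) := by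
        exact div_le_div_of_nonneg_right hkey hN'r.le
    _ = pbar * ((n.choose s : ℝ) / (n'.choose s : ℝ))
        + (s : ℝ) / (n' : ℝ) - ((s : ℝ) / (n : ℝ)) * ((n.choose s : ℝ) / (n'.choose s : ℝ)) := by
        rw [ha, ha']
        field_simp
        ring
end

section
/- Monotonicity enabling binary search: For fixed lower bounds p̲_{μ_1} ≥ p̲_{μ_2} ≥ ... ≥ p̲_{μ_k} and fixed upper bounds p̄_j (j outside the target set), define L(r') = p̲*_{μ_{r'}} (where p̲*_{μ_{r'}} = ⌊p̲_{μ_{r'}}·C(n,s)⌋/C(n,s)) and R(r') = min( min_{c=1}^{N−r'+1} N'·(p̄*_{H_c} + σ)/c , p̄*_{v_1} + σ ), where H_c is the set of c items with smallest upper bounds among the N−r'+1 items with largest upper bounds outside the target set. Then L(r') is non-increasing in r' and R(r') is non-decreasing in r'. Consequently, the set of r' satisfying L(r') > R(r') is a downward-closed interval {1,...,r}, so binary search correctly finds the maximal feasible r'. -/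
/-- Monotonicity enabling binary search in PORE. With sorted lower bounds
`q 1 ≥ q 2 ≥ ⋯ ≥ q k` (so `L r' = ⌊q r'·C⌋/C` is non-increasing) and descending-sorted
upper bounds `w 1 ≥ w 2 ≥ ⋯` outside the target set, where `H_c` for a given `r'` consists
of the `c` items with smallest upper bounds among the `N − r' + 1` items with largest upper
bounds (i.e. positions `N − r' + 2 − c, …, N − r' + 1` of `w`), define
`R r' = min ( min_{c=1}^{N−r'+1} N'·(⌈(Σ_{j∈H_c} w j / N')·C⌉/C + σ)/c , ⌈w(N−r'+1)·C⌉/C + σ )`.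
Then `L` is non-increasing, `R` is non-decreasing, and the feasible set
`{r' : L r' > R r'}` is downward closed on `{1, …, min k N}`. -/
theorem binary_search_monotonicity
    (k N N' C : ℕ) (hC : 1 ≤ C) (hN' : 1 ≤ N') (hk : 1 ≤ k) (hN : 1 ≤ N)
    (σ : ℝ) (hσ : 0 ≤ σ)
    (q : ℕ → ℝ) (hq0 : ∀ i, 0 ≤ q i)
    (hqa : ∀ i j, 1 ≤ i → i ≤ j → j ≤ k → q j ≤ q i)
    (w : ℕ → ℝ) (hw0 : ∀ j, 0 ≤ w j)
    (hwa : ∀ i j, 1 ≤ i → i ≤ j → w j ≤ w i) :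
    let L : ℕ → ℝ := fun r' => (⌊q r' * (C : ℝ)⌋ : ℝ) / (C : ℝ)
    let R : ℕ → ℝ := fun r' =>
      min ((Finset.Icc 1 (N - r' + 1)).inf'
            (Finset.nonempty_Icc.2 (by omega))
            (fun c => (N' : ℝ) *
              ((⌈((∑ j ∈ Finset.Icc (N - r' + 2 - c) (N - r' + 1), w j) / (N' : ℝ)) * (C : ℝ)⌉ : ℝ)
                  / (C : ℝ) + σ) / (c : ℝ)))
        ((⌈w (N - r' + 1) * (C : ℝ)⌉ : ℝ) / (C : ℝ) + σ)
    (∀ r₁ r₂, 1 ≤ r₁ → r₁ ≤ r₂ → r₂ ≤ min k N → L r₂ ≤ L r₁) ∧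
    (∀ r₁ r₂, 1 ≤ r₁ → r₁ ≤ r₂ → r₂ ≤ min k N → R r₁ ≤ R r₂) ∧
    (∀ r₁ r₂, 1 ≤ r₁ → r₁ ≤ r₂ → r₂ ≤ min k N → R r₂ < L r₂ → R r₁ < L r₁) := by
  intro L R
  have hCpos : (0:ℝ) < C := by exact_mod_cast hC
  have hN'pos : (0:ℝ) < N' := by exact_mod_cast hN'
  have hL : ∀ r₁ r₂, 1 ≤ r₁ → r₁ ≤ r₂ → r₂ ≤ min k N → L r₂ ≤ L r₁ := by
    intro r₁ r₂ h1 h12 h2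
    have hq : q r₂ ≤ q r₁ := hqa r₁ r₂ h1 h12 (le_trans h2 (min_le_left _ _))
    simp only [L]
    gcongr
  have hR : ∀ r₁ r₂, 1 ≤ r₁ → r₁ ≤ r₂ → r₂ ≤ min k N → R r₁ ≤ R r₂ := by
    intro r₁ r₂ h1 h12 h2
    have hr₂N : r₂ ≤ N := le_trans h2 (min_le_right _ _)
    simp only [R]
    apply le_min
    · refine le_trans (min_le_left _ _) ?_
      apply Finset.le_inf'
      intro c hc
      simp only [Finset.mem_Icc] at hc
      refine le_trans (Finset.inf'_le _ (show c ∈ Finset.Icc 1 (N - r₁ + 1) from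
        Finset.mem_Icc.2 ⟨hc.1, by omega⟩)) ?_
      have hsum : ∑ j ∈ Finset.Icc (N - r₁ + 2 - c) (N - r₁ + 1), w j
          ≤ ∑ j ∈ Finset.Icc (N - r₂ + 2 - c) (N - r₂ + 1), w j := by
        rw [← Finset.Ico_add_one_right_eq_Icc, ← Finset.Ico_add_one_right_eq_Icc,
          Finset.sum_Ico_eq_sum_range, Finset.sum_Ico_eq_sum_range]
        have e1 : N - r₁ + 1 + 1 - (N - r₁ + 2 - c) = c := by omega
        have e2 : N - r₂ + 1 + 1 - (N - r₂ + 2 - c) = c := by omega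
        rw [e1, e2]
        apply Finset.sum_le_sum
        intro i _
        exact hwa (N - r₂ + 2 - c + i) (N - r₁ + 2 - c + i) (by omega) (by omega)
      have hcpos : (0:ℝ) < c := by exact_mod_cast hc.1
      gcongr
    · refine le_trans (min_le_right _ _) ?_
      have hw : w (N - r₁ + 1) ≤ w (N - r₂ + 1) :=
        hwa (N - r₂ + 1) (N - r₁ + 1) (by omega) (by omega)
      gcongr
  refine ⟨hL, hR, ?_⟩
  intro r₁ r₂ h1 h12 h2 hlt
  exact lt_of_le_of_lt (hR r₁ r₂ h1 h12 h2) (lt_of_lt_of_le hlt (hL r₁ r₂ h1 h12 h2))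
end

section
/- For a top-N selection by scores: if a set S of N items is such that every item in S has score at least as large as every item not in S, and A is any set of items with |A ∩ S| < r where r ≤ min(|A|, N), then the r-th largest score among items of A is at most the (N−r+1)-th largest score among items not in A. -/
open scoped Classical

/-- The `r`-th largest value (order statistic from above) of `f` over a finset `A`:
the `(r-1)`-indexed entry of the descending sort of the multiset of values. -/
noncomputable def kthLargest {ι : Type*} (A : Finset ι) (f : ι → ℝ) (r : ℕ) : ℝ :=
  ((A.val.map f).sort (· ≥ ·)).getD (r - 1) 0

private lemma sorted_count_ge (l : List ℝ) (hs : l.Pairwise (· ≥ ·)) (k : ℕ)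
    (hk1 : 1 ≤ k) (hk : k ≤ l.length) :
    k ≤ (l.filter (fun x => decide (l.getD (k-1) 0 ≤ x))).length := by
  have hk1' : k - 1 < l.length := lt_of_lt_of_le (Nat.sub_lt hk1 one_pos) hk
  have hgd : l.getD (k-1) 0 = l[k-1] := List.getD_eq_getElem l 0 hk1'
  have hall : ∀ x ∈ l.take k, decide (l.getD (k-1) 0 ≤ x) = true := by
    intro x hx
    rw [List.mem_take_iff_getElem] at hx
    obtain ⟨i, hi, rfl⟩ := hx
    have hik : i ≤ k - 1 := Nat.le_sub_one_of_lt (lt_min_iff.mp hi).1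
    simp only [decide_eq_true_eq, hgd]
    exact List.Pairwise.rel_get_of_le hs hik
  have h1 : (l.take k).filter (fun x => decide (l.getD (k-1) 0 ≤ x)) = l.take k :=
    List.filter_eq_self.mpr hall
  have h2 : ((l.take k).filter (fun x => decide (l.getD (k-1) 0 ≤ x))).length
      ≤ (l.filter (fun x => decide (l.getD (k-1) 0 ≤ x))).length :=
    ((l.take_sublist k).filter _).length_le
  rw [h1] at h2
  simpa [List.length_take, Nat.min_eq_left hk] using h2

private lemma sorted_getD_ge (l : List ℝ) (hs : l.Pairwise (· ≥ ·)) (k : ℕ) (a : ℝ)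
    (hk1 : 1 ≤ k) (h : k ≤ (l.filter (fun x => decide (a ≤ x))).length) :
    a ≤ l.getD (k-1) 0 := by
  by_contra hlt
  push_neg at hlt
  have hk : k ≤ l.length := le_trans h (List.length_filter_le _ _)
  have hk1' : k - 1 < l.length := lt_of_lt_of_le (Nat.sub_lt hk1 one_pos) hk
  have hgd : l.getD (k-1) 0 = l[k-1] := List.getD_eq_getElem l 0 hk1'
  have hdrop : (l.drop (k-1)).filter (fun x => decide (a ≤ x)) = [] := by
    rw [List.filter_eq_nil_iff]
    intro x hx
    rw [List.mem_iff_getElem] at hx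
    obtain ⟨i, hi, rfl⟩ := hx
    have hidx : k - 1 + i < l.length := by
      rw [List.length_drop] at hi; omega
    have heq : (List.drop (k-1) l)[i] = l[k-1+i] := List.getElem_drop (xs := l) (i := k-1) (j := i) (h := hi)
    rw [heq]
    have hle : l[k-1+i] ≤ l[k-1] :=
      List.Pairwise.rel_get_of_le hs (Nat.le_add_right _ _)
    simp only [decide_eq_true_eq, not_le]
    exact lt_of_le_of_lt hle (hgd ▸ hlt)
  have := List.take_append_drop (k-1) l
  have hsplit : l.filter (fun x => decide (a ≤ x))
      = (l.take (k-1)).filter (fun x => decide (a ≤ x))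
        ++ (l.drop (k-1)).filter (fun x => decide (a ≤ x)) := by
    conv_lhs => rw [← this]
    exact List.filter_append _ _
  rw [hsplit, hdrop, List.append_nil] at h
  have : (( l.take (k-1)).filter (fun x => decide (a ≤ x))).length ≤ k - 1 :=
    le_trans (List.length_filter_le _ _) (by simp [List.length_take])
  omega

private lemma card_filter_eq {ι : Type*} (A : Finset ι) (f : ι → ℝ) (a : ℝ) :
    (A.filter (fun i => a ≤ f i)).card
      = (((A.val.map f).sort (· ≥ ·)).filter (fun x => decide (a ≤ x))).length := by
  have h1 : ((A.val.map f).sort (· ≥ ·) : Multiset ℝ) = A.val.map f :=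
    Multiset.sort_eq _ _
  have h2 : ((((A.val.map f).sort (· ≥ ·)).filter (fun x => decide (a ≤ x)) : List ℝ) : Multiset ℝ)
      = Multiset.filter (fun x => a ≤ x) (A.val.map f) := by
    conv_rhs => rw [← h1]
    rw [Multiset.filter_coe]
  have h3 : (((A.val.map f).sort (· ≥ ·)).filter (fun x => decide (a ≤ x))).length
      = Multiset.card (Multiset.filter (fun x => a ≤ x) (A.val.map f)) := by
    rw [← h2]; simp
  rw [h3, Multiset.filter_map, Multiset.card_map]
  simp only [Function.comp]
  rfl

private lemma kthLargest_count {ι : Type*} (A : Finset ι) (f : ι → ℝ) (k : ℕ)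
    (hk1 : 1 ≤ k) (hk : k ≤ A.card) :
    k ≤ (A.filter (fun i => kthLargest A f k ≤ f i)).card := by
  rw [card_filter_eq]
  refine sorted_count_ge _ (Multiset.pairwise_sort _ _) k hk1 ?_
  simpa [Multiset.length_sort] using hk

private lemma le_kthLargest {ι : Type*} (A : Finset ι) (f : ι → ℝ) (k : ℕ) (a : ℝ)
    (hk1 : 1 ≤ k) (h : k ≤ (A.filter (fun i => a ≤ f i)).card) :
    a ≤ kthLargest A f k := by
  rw [card_filter_eq] at h
  exact sorted_getD_ge _ (Multiset.pairwise_sort _ _) k a hk1 h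

/-- Top-`N` selection by scores: if every item of `S` (with `|S| = N`) scores at least as much
as every item outside `S`, and `A` is a set of items with `|A ∩ S| < r` where
`r ≤ min(|A|, N)` and `r ≥ 1`, then the `r`-th largest score among items of `A` is at most the
`(N − r + 1)`-th largest score among items not in `A`. -/
theorem top_N_order_statistic {ι : Type*} [Fintype ι] [DecidableEq ι]
    (score : ι → ℝ) (N r : ℕ) (hr : 1 ≤ r)
    (S : Finset ι) (hS : S.card = N)
    (htop : ∀ i ∈ S, ∀ j ∉ S, score j ≤ score i)
    (A : Finset ι) (hrA : r ≤ A.card) (hrN : r ≤ N)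
    (hlt : (A ∩ S).card < r) :
    kthLargest A score r ≤ kthLargest (Finset.univ \ A) score (N - r + 1) := by
  set a := kthLargest A score r with ha
  have h1 : r ≤ (A.filter (fun i => a ≤ score i)).card :=
    kthLargest_count A score r hr hrA
  have hnot : ¬ (A.filter (fun i => a ≤ score i) ⊆ S) := by
    intro hsub
    have hsub2 : A.filter (fun i => a ≤ score i) ⊆ A ∩ S :=
      Finset.subset_inter (Finset.filter_subset _ _) hsub
    have := Finset.card_le_card hsub2
    omega
  obtain ⟨i, hiF, hiS⟩ := Finset.not_subset.mp hnot
  obtain ⟨hiA, hia⟩ := Finset.mem_filter.mp hiF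
  have hSge : ∀ s ∈ S, a ≤ score s := fun s hs => le_trans hia (htop s hs i hiS)
  have hsub : S \ A ⊆ (Finset.univ \ A).filter (fun j => a ≤ score j) := by
    intro j hj
    obtain ⟨hjS, hjA⟩ := Finset.mem_sdiff.mp hj
    exact Finset.mem_filter.mpr ⟨Finset.mem_sdiff.mpr ⟨Finset.mem_univ _, hjA⟩, hSge j hjS⟩
  have hcard : (S \ A).card + (S ∩ A).card = S.card := Finset.card_sdiff_add_card_inter S A
  have hAS : (S ∩ A).card = (A ∩ S).card := by rw [Finset.inter_comm]
  have hge : N - r + 1 ≤ ((Finset.univ \ A).filter (fun j => a ≤ score j)).card := by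
    have := Finset.card_le_card hsub
    omega
  exact le_kthLargest _ score (N - r + 1) a (by omega) hge
end

section
/- If T_i ~ Binomial(T, p_i) and p̲_i = Beta(α; T_i, T − T_i + 1) denotes the α-quantile of the Beta distribution with parameters (T_i, T − T_i + 1) (the Clopper–Pearson lower confidence limit), then Pr(p̲_i ≤ p_i) ≥ 1 − α. -/
open scoped Classical

/-- The CDF of the Beta distribution with parameters `a, b`:
`F(x) = ∫_0^x t^(a-1)·(1-t)^(b-1)·Γ(a+b)/(Γ(a)·Γ(b)) dt`. -/
noncomputable def betaCDF (a b : ℝ) (x : ℝ) : ℝ :=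
  ∫ t in Set.Ioc (0 : ℝ) x,
    t ^ (a - 1) * (1 - t) ^ (b - 1) * (Real.Gamma (a + b) / (Real.Gamma a * Real.Gamma b))

/-- The `β`-th quantile of the Beta distribution with parameters `a, b`. -/
noncomputable def betaQuantile (β a b : ℝ) : ℝ :=
  sInf {x : ℝ | x ∈ Set.Icc (0 : ℝ) 1 ∧ β ≤ betaCDF a b x}

/-- The Clopper–Pearson lower confidence limit after observing `t` successes out of `T`:
the `α`-quantile of `Beta(t, T − t + 1)`, taken to be `0` when `t = 0`. -/
noncomputable def clopperPearsonLower (α : ℝ) (T t : ℕ) : ℝ :=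
  if t = 0 then 0 else betaQuantile α (t : ℝ) ((T : ℝ) - (t : ℝ) + 1)


lemma betaCDF_b_zero (a : ℝ) (p : ℝ) : betaCDF a 0 p = 0 := by
  unfold betaCDF
  simp [Real.Gamma_zero]

lemma betaCDF_nat (a b : ℕ) (ha : 1 ≤ a) (hb : 1 ≤ b) {p : ℝ} (hp : 0 ≤ p) :
    betaCDF a b p =
      ∫ x in (0:ℝ)..p, x ^ (a-1) * (1-x) ^ (b-1) *
        (((a+b-1).factorial : ℝ) / ((a-1).factorial * (b-1).factorial)) := by
  unfold betaCDF
  rw [intervalIntegral.integral_of_le hp]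
  have h1 : ((a:ℝ)) - 1 = ((a-1 : ℕ) : ℝ) := by
    have := Nat.cast_sub ha (R := ℝ); push_cast at this ⊢; linarith
  have h2 : ((b:ℝ)) - 1 = ((b-1 : ℕ) : ℝ) := by
    have := Nat.cast_sub hb (R := ℝ); push_cast at this ⊢; linarith
  have hg1 : Real.Gamma ((a:ℝ) + b) = ((a+b-1).factorial : ℝ) := by
    have : ((a:ℝ)) + b = ((a+b-1 : ℕ) : ℝ) + 1 := by
      have : 1 ≤ a + b := le_trans ha (Nat.le_add_right _ _)
      have := Nat.cast_sub this (R := ℝ); push_cast at this ⊢; linarith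
    rw [this, Real.Gamma_nat_eq_factorial]
  have hg2 : Real.Gamma ((a:ℝ)) = ((a-1).factorial : ℝ) := by
    have : ((a:ℝ)) = ((a-1 : ℕ) : ℝ) + 1 := by rw [← h1]; ring
    rw [this, Real.Gamma_nat_eq_factorial]
  have hg3 : Real.Gamma ((b:ℝ)) = ((b-1).factorial : ℝ) := by
    have : ((b:ℝ)) = ((b-1 : ℕ) : ℝ) + 1 := by rw [← h2]; ring
    rw [this, Real.Gamma_nat_eq_factorial]
  congr 1
  funext x
  rw [h1, h2, hg1, hg2, hg3, Real.rpow_natCast, Real.rpow_natCast]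

lemma hasDerivAt_mono (t d : ℕ) (x : ℝ) :
    HasDerivAt (fun y : ℝ => y^t * (1-y)^d)
      ((t:ℝ) * x^(t-1) * (1-x)^d - (d:ℝ) * x^t * (1-x)^(d-1)) x := by
  have h1 : HasDerivAt (fun y : ℝ => y^t) ((t:ℝ)*x^(t-1)) x := hasDerivAt_pow t x
  have hin : HasDerivAt (fun y : ℝ => 1 - y) (-1) x := by
    simpa using (hasDerivAt_id x).const_sub 1
  have h2 : HasDerivAt (fun y : ℝ => (1-y)^d) (-((d:ℝ)*(1-x)^(d-1))) x := by
    simpa [Function.comp_def] using ((hasDerivAt_pow d (1-x)).comp x hin)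
  have := h1.fun_mul h2
  refine this.congr_deriv ?_
  ring

lemma step_integral (t d : ℕ) (ht : 1 ≤ t) (p : ℝ) :
    ∫ x in (0:ℝ)..p, ((t:ℝ) * x^(t-1)*(1-x)^d - (d:ℝ) * x^t * (1-x)^(d-1))
      = p^t * (1-p)^d := by
  rw [intervalIntegral.integral_eq_sub_of_hasDerivAt
    (fun x _ => hasDerivAt_mono t d x)
    (Continuous.intervalIntegrable (by continuity) 0 p)]
  simp [zero_pow (by omega : t ≠ 0)]

lemma fac_succ_cast (n : ℕ) (hn : 1 ≤ n) : ((n.factorial : ℝ)) = n * (n-1).factorial := by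
  obtain ⟨s, rfl⟩ : ∃ s, n = s + 1 := ⟨n-1, by omega⟩
  rw [Nat.factorial_succ]
  push_cast
  ring

lemma beta_eq_tail (T : ℕ) {p : ℝ} (hp0 : 0 ≤ p) :
    ∀ d t, t + d = T + 1 → 1 ≤ t →
      betaCDF t ((T:ℝ) - t + 1) p
        = ∑ k ∈ Finset.Ico t (T+1), (T.choose k : ℝ) * p^k * (1-p)^(T-k) := by
  intro d
  induction d with
  | zero =>
    intro t h ht
    obtain rfl : t = T + 1 := by omega
    have hb : ((T:ℝ)) - ((T+1 : ℕ) : ℝ) + 1 = 0 := by push_cast; ring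
    rw [hb, betaCDF_b_zero]
    simp
  | succ d ih =>
    intro t h ht
    have htT : t ≤ T := by omega
    have hd : T - t = d := by omega
    set C : ℝ := (T.choose t : ℝ) with hC
    have hfac : C * t.factorial * d.factorial = (T.factorial : ℝ) := by
      have h0 := Nat.choose_mul_factorial_mul_factorial htT
      rw [hd] at h0
      rw [hC]
      exact_mod_cast h0
    have htfac : (0:ℝ) < t.factorial := by exact_mod_cast t.factorial_pos
    have hdfac : (0:ℝ) < d.factorial := by exact_mod_cast d.factorial_pos
    -- A : first betaCDF as interval integral
    have hb1 : ((T:ℝ)) - t + 1 = ((d+1 : ℕ) : ℝ) := by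
      have : (t:ℝ) ≤ T := by exact_mod_cast htT
      push_cast
      have := (Nat.cast_sub htT (R := ℝ))
      rw [hd] at this; push_cast at this; linarith
    have hK1 : ((T.factorial : ℝ)) / ((t-1).factorial * d.factorial) = C * t := by
      rw [← hfac, fac_succ_cast t ht]
      field_simp
    have A : betaCDF t ((T:ℝ) - t + 1) p
        = ∫ x in (0:ℝ)..p, C * (t:ℝ) * (x^(t-1)*(1-x)^d) := by
      rw [hb1, betaCDF_nat t (d+1) ht (by omega) hp0]
      congr 1
      funext x
      have : t + (d+1) - 1 = T := by omega
      rw [show (d+1) - 1 = d from rfl, this, hK1]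
      ring
    -- B : second betaCDF as interval integral
    have B : betaCDF (t+1) ((T:ℝ) - ((t+1:ℕ):ℝ) + 1) p
        = ∫ x in (0:ℝ)..p, C * (d:ℝ) * (x^t*(1-x)^(d-1)) := by
      rcases Nat.eq_zero_or_pos d with hd0 | hd1
      · subst hd0
        have hb2 : ((T:ℝ)) - ((t+1:ℕ):ℝ) + 1 = 0 := by
          push_cast
          have : (t:ℝ) = T := by exact_mod_cast (by omega : t = T)
          linarith
        rw [hb2, betaCDF_b_zero]
        simp
      · have hb2 : ((T:ℝ)) - ((t+1:ℕ):ℝ) + 1 = ((d : ℕ) : ℝ) := by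
          push_cast at hb1 ⊢; linarith
        have hK2 : ((T.factorial : ℝ)) / (t.factorial * (d-1).factorial) = C * d := by
          rw [← hfac, fac_succ_cast d hd1]
          field_simp
        have hB := betaCDF_nat (t+1) d (by omega) hd1 hp0
        push_cast at hB
        rw [hb2, hB]
        congr 1
        funext x
        have h3 : (t+1) + d - 1 = T := by omega
        rw [h3, hK2]
        ring
    -- key FTC identity
    have key : (∫ x in (0:ℝ)..p, (C * (t:ℝ) * (x^(t-1)*(1-x)^d) - C * (d:ℝ) * (x^t*(1-x)^(d-1))))
        = C * (p^t * (1-p)^d) := by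
      rw [← step_integral t d ht p, ← intervalIntegral.integral_const_mul]
      exact intervalIntegral.integral_congr (fun x _ => by ring)
    have i1 : IntervalIntegrable (fun x : ℝ => C * (t:ℝ) * (x^(t-1)*(1-x)^d)) MeasureTheory.volume 0 p :=
      Continuous.intervalIntegrable (by fun_prop) 0 p
    have i2 : IntervalIntegrable (fun x : ℝ => C * (d:ℝ) * (x^t*(1-x)^(d-1))) MeasureTheory.volume 0 p :=
      Continuous.intervalIntegrable (by fun_prop) 0 p
    have hsub := intervalIntegral.integral_sub i1 i2
    rw [Finset.sum_eq_sum_Ico_succ_bot (by omega : t < T+1),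
      ← ih (t+1) (by omega) (by omega)]
    push_cast
    rw [A] at *
    rw [hd]
    rw [show betaCDF (↑t + 1) (↑T - (↑t + 1) + 1) p
        = ∫ x in (0:ℝ)..p, C * (d:ℝ) * (x^t*(1-x)^(d-1)) from by
      rw [← B]; norm_num]
    have hprod : C * (p^t * (1-p)^d) = (T.choose t : ℝ) * p^t * (1-p)^d := by ring
    rw [hsub] at key
    linarith


lemma quantile_le {α a b p : ℝ} (hp : p ∈ Set.Icc (0:ℝ) 1) (h : α ≤ betaCDF a b p) :
    betaQuantile α a b ≤ p :=
  csInf_le ⟨0, fun _ hx => hx.1.1⟩ ⟨hp, h⟩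

lemma pmf_sum (T : ℕ) (p : ℝ) :
    ∑ t ∈ Finset.range (T+1), (T.choose t : ℝ) * p^t * (1-p)^(T-t) = 1 := by
  have h := add_pow p (1-p) T
  norm_num at h
  have h2 : ∑ t ∈ Finset.range (T+1), (T.choose t : ℝ) * p^t * (1-p)^(T-t)
      = ∑ m ∈ Finset.range (T+1), p^m * (1-p)^(T-m) * (T.choose m : ℝ) :=
    Finset.sum_congr rfl (fun t _ => by ring)
  rw [h2, ← h]

lemma counting (N : ℕ) (f g : ℕ → ℝ) (α : ℝ) (hα : 0 ≤ α)
    (hf0 : ∀ t, 0 ≤ f t) (hg0 : ∀ t, 0 ≤ g t)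
    (htot : ∑ t ∈ Finset.range N, f t = 1)
    (hg : ∀ t < N, α ≤ ∑ k ∈ Finset.Ico t N, f k → g t = 1) :
    1 - α ≤ ∑ t ∈ Finset.range N, f t * g t := by
  classical
  by_cases hall : ∀ t ∈ Finset.range N, α ≤ ∑ k ∈ Finset.Ico t N, f k
  · have : ∑ t ∈ Finset.range N, f t * g t = ∑ t ∈ Finset.range N, f t := by
      refine Finset.sum_congr rfl (fun t ht => ?_)
      rw [hg t (Finset.mem_range.mp ht) (hall t ht), mul_one]
    rw [this, htot]
    linarith
  · push_neg at hall
    obtain ⟨t', ht', hSt'⟩ := hall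
    have hex : ∃ n, ∑ k ∈ Finset.Ico n N, f k < α := ⟨t', hSt'⟩
    set t0 := Nat.find hex with ht0def
    have ht0spec : ∑ k ∈ Finset.Ico t0 N, f k < α := Nat.find_spec hex
    have ht0le : t0 ≤ t' := Nat.find_le hSt'
    have ht0N : t0 < N := lt_of_le_of_lt ht0le (Finset.mem_range.mp ht')
    have hlow : ∀ t < t0, α ≤ ∑ k ∈ Finset.Ico t N, f k := by
      intro t htl
      have := Nat.find_min hex htl
      linarith [not_lt.mp this]
    have h1 : ∑ t ∈ Finset.range t0, f t ≤ ∑ t ∈ Finset.range N, f t * g t := by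
      calc ∑ t ∈ Finset.range t0, f t
          = ∑ t ∈ Finset.range t0, f t * g t := by
            refine Finset.sum_congr rfl (fun t ht => ?_)
            have htl : t < t0 := Finset.mem_range.mp ht
            rw [hg t (lt_trans htl ht0N) (hlow t htl), mul_one]
        _ ≤ ∑ t ∈ Finset.range N, f t * g t := by
            refine Finset.sum_le_sum_of_subset_of_nonneg
              (Finset.range_subset_range.mpr (by omega)) ?_
            exact fun i _ _ => mul_nonneg (hf0 i) (hg0 i)
    have hsplit : ∑ t ∈ Finset.range t0, f t + ∑ k ∈ Finset.Ico t0 N, f k = 1 := by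
      rw [← htot]
      simp only [Finset.range_eq_Ico]
      exact Finset.sum_Ico_consecutive f (by omega) (by omega)
    linarith


/-- Clopper–Pearson coverage: if `T_i ∼ Binomial(T, p)` and `p̲_i` is the Clopper–Pearson
lower confidence limit `Beta(α; T_i, T − T_i + 1)`, then `Pr(p̲_i ≤ p) ≥ 1 − α`.
The probability is written as the expectation under the binomial pmf of the indicator of the
event that the lower limit does not exceed the true parameter `p`. -/
theorem clopper_pearson_lower_coverage (T : ℕ) (hT : 1 ≤ T) (p : ℝ)
    (hp0 : 0 ≤ p) (hp1 : p ≤ 1) (α : ℝ) (hα0 : 0 < α) (hα1 : α < 1) :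
    1 - α ≤ ∑ t ∈ Finset.range (T + 1),
      (T.choose t : ℝ) * p ^ t * (1 - p) ^ (T - t) *
        (if clopperPearsonLower α T t ≤ p then 1 else 0) := by
  classical
  have hf0 : ∀ t : ℕ, 0 ≤ (T.choose t : ℝ) * p ^ t * (1 - p) ^ (T - t) := by
    intro t
    have h1 : (0:ℝ) ≤ 1 - p := by linarith
    positivity
  have hg0 : ∀ t : ℕ, (0:ℝ) ≤ if clopperPearsonLower α T t ≤ p then 1 else 0 := by
    intro t
    split <;> norm_num
  have hcov : ∀ t, t < T + 1 →
      α ≤ ∑ k ∈ Finset.Ico t (T+1), (T.choose k : ℝ) * p ^ k * (1 - p) ^ (T - k) →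
      (if clopperPearsonLower α T t ≤ p then (1:ℝ) else 0) = 1 := by
    intro t ht hαS
    rw [if_pos]
    rcases Nat.eq_zero_or_pos t with rfl | htpos
    · simpa [clopperPearsonLower] using hp0
    · have hid := beta_eq_tail T hp0 (T+1-t) t (by omega) htpos
      rw [clopperPearsonLower, if_neg (by omega)]
      exact quantile_le ⟨hp0, hp1⟩ (by rw [hid]; exact hαS)
  exact counting (T+1) (fun t => (T.choose t : ℝ) * p ^ t * (1 - p) ^ (T - t))
    (fun t => if clopperPearsonLower α T t ≤ p then 1 else 0) α hα0.le
    hf0 hg0 (pmf_sum T p) hcov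
end
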